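/- Let f : Y → X be a covering with f(u) = v, and let u' be another vertex in the fiber f^{-1}(v). Then there is a covering automorphism a of f with a(u) = u' if and only if for every closed path γ at v, the lift of γ at u is closed if and only if the lift of γ at u' is closed. Moreover such an automorphism is unique. -/

import Mathlib

/-- A (Serre-style) combinatorial graph: a vertex set `V`, an edge set `E`,
a start map `s`, and a fixed-point-free involution `inv` on edges. -/
structure SerreGraph (V : Type) (E : Type) where
  s : E → V
  inv : E → E
  inv_ne : ∀ e, inv e ≠ e
  inv_inv : ∀ e, inv (inv e) = e

namespace SerreGraph

variable {V E : Type}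

/-- Terminal vertex of an edge. -/
def t (G : SerreGraph V E) (e : E) : V := G.s (G.inv e)

/-- `G.IsPath u w es` : the list of edges `es` is a path from `u` to `w`. -/
def IsPath (G : SerreGraph V E) : V → V → List E → Prop
  | u, w, [] => u = w
  | u, w, e :: es => G.s e = u ∧ G.IsPath (G.t e) w es

/-- A path is reduced when it contains no spur `e, e⁻¹`. -/
def Reduced (G : SerreGraph V E) (es : List E) : Prop :=
  es.Chain' fun a b => b ≠ G.inv a

/-- Elementary homotopy: insertion of a spur `e, e⁻¹`. -/
inductive Elem (G : SerreGraph V E) : List E → List E → Prop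
  | spur (l₁ l₂ : List E) (e : E) : Elem G (l₁ ++ l₂) (l₁ ++ e :: G.inv e :: l₂)

/-- Two edge lists are (freely) homotopic when related by a finite sequence of
insertions/deletions of spurs. -/
def Homotopic (G : SerreGraph V E) : List E → List E → Prop :=
  Relation.EqvGen G.Elem

/-- A graph is connected when any two vertices are joined by a path. -/
def Connected (G : SerreGraph V E) : Prop :=
  ∀ u w : V, ∃ es : List E, G.IsPath u w es

/-- A forest: every closed path is homotopically trivial. -/
def IsForest (G : SerreGraph V E) : Prop :=
  ∀ (v : V) (es : List E), G.IsPath v v es → G.Homotopic es []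

/-- A tree is a connected forest. -/
def IsTree (G : SerreGraph V E) : Prop :=
  G.Connected ∧ G.IsForest

end SerreGraph

namespace SerreGraph
variable {V E : Type}

def rev (G : SerreGraph V E) (l : List E) : List E := (l.map G.inv).reverse

lemma rev_rev (G : SerreGraph V E) (l : List E) : G.rev (G.rev l) = l := by
  simp only [rev, List.map_reverse, List.reverse_reverse, List.map_map]
  conv_rhs => rw [← List.map_id l]
  exact List.map_congr_left (fun e _ => G.inv_inv e)

lemma isPath_append {G : SerreGraph V E} {a b c : V} {l m : List E}
    (h1 : G.IsPath a b l) (h2 : G.IsPath b c m) : G.IsPath a c (l ++ m) := by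
  induction l generalizing a with
  | nil => cases h1; simpa using h2
  | cons e es ih => exact ⟨h1.1, ih h1.2⟩

lemma isPath_append_split {G : SerreGraph V E} {a c : V} {l m : List E}
    (h : G.IsPath a c (l ++ m)) : ∃ b, G.IsPath a b l ∧ G.IsPath b c m := by
  induction l generalizing a with
  | nil => exact ⟨a, rfl, h⟩
  | cons e es ih =>
    obtain ⟨b, hb1, hb2⟩ := ih h.2
    exact ⟨b, ⟨h.1, hb1⟩, hb2⟩

lemma isPath_end_unique {G : SerreGraph V E} {a b b' : V} {l : List E}
    (h : G.IsPath a b l) (h' : G.IsPath a b' l) : b = b' := by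
  induction l generalizing a with
  | nil => exact h.symm.trans h'
  | cons e es ih => exact ih h.2 h'.2

lemma isPath_rev {G : SerreGraph V E} {a b : V} {l : List E}
    (h : G.IsPath a b l) : G.IsPath b a (G.rev l) := by
  induction l generalizing a with
  | nil => cases h; exact rfl
  | cons e es ih =>
    have : G.rev (e :: es) = G.rev es ++ [G.inv e] := by simp [rev]
    rw [this]
    refine isPath_append (ih h.2) ⟨rfl, ?_⟩
    show G.s (G.inv (G.inv e)) = a
    rw [G.inv_inv]; exact h.1

end SerreGraph


/-- A (dimension preserving) map of graphs. -/
structure GraphMap {V E V' E' : Type} (G : SerreGraph V E) (G' : SerreGraph V' E') where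
  fV : V → V'
  fE : E → E'
  map_s : ∀ e, G'.s (fE e) = fV (G.s e)
  map_inv : ∀ e, fE (G.inv e) = G'.inv (fE e)

/-- A graph map is a covering when at every vertex the local continuity map on
edge stars is a bijection. -/
def GraphMap.IsCovering {V E V' E' : Type} {G : SerreGraph V E} {G' : SerreGraph V' E'}
    (f : GraphMap G G') : Prop :=
  ∀ u : V, Function.Bijective
    (fun e : {e : E // G.s e = u} =>
      (⟨f.fE e.1, (f.map_s e.1).trans (congrArg f.fV e.2)⟩ : {e' : E' // G'.s e' = f.fV u}))

section Lift
variable {VY EY VX EX : Type} {GY : SerreGraph VY EY} {GX : SerreGraph VX EX}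

lemma GraphMap.map_t (f : GraphMap GY GX) (e : EY) : f.fV (GY.t e) = GX.t (f.fE e) := by
  show f.fV (GY.s (GY.inv e)) = GX.s (GX.inv (f.fE e))
  rw [← f.map_inv, f.map_s]

lemma GraphMap.map_path (f : GraphMap GY GX) {y w : VY} {es : List EY}
    (h : GY.IsPath y w es) : GX.IsPath (f.fV y) (f.fV w) (es.map f.fE) := by
  induction es generalizing y with
  | nil => cases h; exact rfl
  | cons e es ih =>
    refine ⟨(f.map_s e).trans (congrArg f.fV h.1), ?_⟩
    rw [← f.map_t]; exact ih h.2

lemma map_rev (f : GraphMap GY GX) (l : List EY) :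
    (GY.rev l).map f.fE = GX.rev (l.map f.fE) := by
  simp only [SerreGraph.rev, List.map_reverse, List.map_map]
  congr 1
  exact List.map_congr_left (fun e _ => f.map_inv e)

variable (f : GraphMap GY GX) (hf : f.IsCovering)

/-- lift of an edge at a vertex -/
noncomputable def eLift (y : VY) (e' : EX) (h : GX.s e' = f.fV y) : EY :=
  (((hf y).2 ⟨e', h⟩).choose : {e : EY // GY.s e = y}).1

lemma eLift_s (y : VY) (e' : EX) (h : GX.s e' = f.fV y) :
    GY.s (eLift f hf y e' h) = y := ((hf y).2 ⟨e', h⟩).choose.2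

lemma eLift_map (y : VY) (e' : EX) (h : GX.s e' = f.fV y) :
    f.fE (eLift f hf y e' h) = e' :=
  congrArg Subtype.val ((hf y).2 ⟨e', h⟩).choose_spec

lemma eLift_inj (hf' : f.IsCovering) {y : VY} {e₁ e₂ : EY} (h₁ : GY.s e₁ = y) (h₂ : GY.s e₂ = y)
    (h : f.fE e₁ = f.fE e₂) : e₁ = e₂ := by
  have := (hf' y).1 (a₁ := ⟨e₁, h₁⟩) (a₂ := ⟨e₂, h₂⟩) (Subtype.ext h)
  exact congrArg Subtype.val this

lemma eLift_unique {y : VY} {e : EY} {e' : EX} (hs : GY.s e = y) (hm : f.fE e = e')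
    (h : GX.s e' = f.fV y) : e = eLift f hf y e' h :=
  eLift_inj f hf hs (eLift_s f hf y e' h) (hm.trans (eLift_map f hf y e' h).symm)

open Classical in
/-- lift of a path at a vertex -/
noncomputable def pLift : VY → List EX → List EY
  | _, [] => []
  | y, e' :: γ =>
    if h : GX.s e' = f.fV y then
      eLift f hf y e' h :: pLift (GY.t (eLift f hf y e' h)) γ
    else []

lemma pLift_spec {w : VX} : ∀ (γ : List EX) (y : VY), GX.IsPath (f.fV y) w γ →
    ∃ z, GY.IsPath y z (pLift f hf y γ) ∧ f.fV z = w ∧ (pLift f hf y γ).map f.fE = γ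
  | [], y, h => ⟨y, rfl, h, rfl⟩
  | e' :: γ, y, h => by
    have hs : GX.s e' = f.fV y := h.1
    rw [pLift, dif_pos hs]
    set e := eLift f hf y e' hs with he
    have h2 : GX.IsPath (f.fV (GY.t e)) w γ := by
      rw [f.map_t, he, eLift_map f hf y e' hs]; exact h.2
    obtain ⟨z, hz1, hz2, hz3⟩ := pLift_spec γ (GY.t e) h2
    exact ⟨z, ⟨eLift_s f hf y e' hs, hz1⟩, hz2, by simp [hz3]; exact eLift_map f hf y e' hs⟩

lemma pLift_unique : ∀ (μ : List EY) (y w : VY) (γ : List EX), GY.IsPath y w μ →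
    μ.map f.fE = γ → μ = pLift f hf y γ
  | [], y, w, γ, _, hm => by rw [← hm]; rfl
  | e :: μ, y, w, γ, hp, hm => by
    subst hm
    have hs : GX.s (f.fE e) = f.fV y := (f.map_s e).trans (congrArg f.fV hp.1)
    rw [List.map_cons, pLift, dif_pos hs]
    have he : e = eLift f hf y (f.fE e) hs := eLift_unique f hf hp.1 rfl hs
    rw [← he]
    exact congrArg _ (pLift_unique μ (GY.t e) w _ hp.2 rfl)

end Lift

/-- A covering automorphism (deck transformation) of a graph map `f : Y → X`:
an automorphism of `Y` commuting with `f`. -/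
structure CovAut {VY EY VX EX : Type} {GY : SerreGraph VY EY} {GX : SerreGraph VX EX}
    (f : GraphMap GY GX) where
  eV : VY ≃ VY
  eE : EY ≃ EY
  map_s : ∀ e, GY.s (eE e) = eV (GY.s e)
  map_inv : ∀ e, eE (GY.inv e) = GY.inv (eE e)
  comm_V : ∀ y, f.fV (eV y) = f.fV y
  comm_E : ∀ e, f.fE (eE e) = f.fE e

section Main
variable {VY EY VX EX : Type} {GY : SerreGraph VY EY} {GX : SerreGraph VX EX}
  (f : GraphMap GY GX)

lemma covaut_t (a : CovAut f) (e : EY) : GY.t (a.eE e) = a.eV (GY.t e) := by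
  show GY.s (GY.inv (a.eE e)) = a.eV (GY.s (GY.inv e))
  rw [← a.map_inv, a.map_s]

lemma covaut_path (a : CovAut f) {y w : VY} {es : List EY}
    (h : GY.IsPath y w es) : GY.IsPath (a.eV y) (a.eV w) (es.map a.eE) := by
  induction es generalizing y with
  | nil => cases h; exact rfl
  | cons e es ih =>
    refine ⟨(a.map_s e).trans (congrArg a.eV h.1), ?_⟩
    rw [covaut_t]; exact ih h.2

lemma covaut_map_fE (a : CovAut f) (es : List EY) :
    (es.map a.eE).map f.fE = es.map f.fE := by
  rw [List.map_map]
  exact List.map_congr_left fun e _ => a.comm_E e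

def CovAut.symm (a : CovAut f) : CovAut f where
  eV := a.eV.symm
  eE := a.eE.symm
  map_s e := a.eV.injective <| by
    rw [← a.map_s, Equiv.apply_symm_apply, Equiv.apply_symm_apply]
  map_inv e := a.eE.injective <| by
    rw [a.map_inv, Equiv.apply_symm_apply, Equiv.apply_symm_apply]
  comm_V y := by conv_rhs => rw [← a.eV.apply_symm_apply y, a.comm_V]
  comm_E e := by conv_rhs => rw [← a.eE.apply_symm_apply e, a.comm_E]

variable (hf : f.IsCovering) {u u' : VY} {v : VX}

lemma end_indep (hu : f.fV u = v) (hu' : f.fV u' = v)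
    (H : ∀ γ : List EX, GX.IsPath v v γ →
        ((∃ μ : List EY, GY.IsPath u u μ ∧ μ.map f.fE = γ) ↔
          ∃ μ' : List EY, GY.IsPath u' u' μ' ∧ μ'.map f.fE = γ))
    {y w₁ w₂ : VY} {μ₁ μ₂ : List EY}
    (h₁ : GY.IsPath u y μ₁) (h₂ : GY.IsPath u y μ₂)
    (hw₁ : GY.IsPath u' w₁ (pLift f hf u' (μ₁.map f.fE)))
    (hw₂ : GY.IsPath u' w₂ (pLift f hf u' (μ₂.map f.fE))) : w₁ = w₂ := by
  set γ₁ := μ₁.map f.fE with hγ₁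
  set γ₂ := μ₂.map f.fE with hγ₂
  have hμ : GY.IsPath u u (μ₁ ++ GY.rev μ₂) :=
    SerreGraph.isPath_append h₁ (SerreGraph.isPath_rev h₂)
  have hγmap : (μ₁ ++ GY.rev μ₂).map f.fE = γ₁ ++ GX.rev γ₂ := by
    rw [List.map_append, map_rev]
  have hγpath : GX.IsPath v v (γ₁ ++ GX.rev γ₂) := by
    have := f.map_path hμ
    rw [hu, hγmap] at this; exact this
  obtain ⟨μ', hμ'p, hμ'm⟩ := (H _ hγpath).mp ⟨_, hμ, hγmap⟩
  -- split μ' at position γ₁.length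
  set n := γ₁.length with hn
  have hsplit : μ' = μ'.take n ++ μ'.drop n := (List.take_append_drop n μ').symm
  have hαm : (μ'.take n).map f.fE = γ₁ := by
    rw [List.map_take, hμ'm, hn, List.take_left]
  have hβm : (μ'.drop n).map f.fE = GX.rev γ₂ := by
    rw [List.map_drop, hμ'm, hn, List.drop_left]
  rw [hsplit] at hμ'p
  obtain ⟨c, hα, hβ⟩ := SerreGraph.isPath_append_split hμ'p
  have hαL : μ'.take n = pLift f hf u' γ₁ := pLift_unique f hf _ _ _ _ hα hαm
  have hc₁ : c = w₁ := by
    rw [hαL] at hα; exact SerreGraph.isPath_end_unique hα hw₁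
  have hrβ : GY.IsPath u' c (GY.rev (μ'.drop n)) := SerreGraph.isPath_rev hβ
  have hrβm : (GY.rev (μ'.drop n)).map f.fE = γ₂ := by
    rw [map_rev, hβm, GX.rev_rev]
  have hβL : GY.rev (μ'.drop n) = pLift f hf u' γ₂ :=
    pLift_unique f hf _ _ _ _ hrβ hrβm
  have hc₂ : c = w₂ := by
    rw [hβL] at hrβ; exact SerreGraph.isPath_end_unique hrβ hw₂
  rw [← hc₁, ← hc₂]

end Main

section Half
variable {VY EY VX EX : Type} {GY : SerreGraph VY EY} {GX : SerreGraph VX EX}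
  (f : GraphMap GY GX) (hf : f.IsCovering) {u u' : VY} {v : VX}

lemma half (hY : GY.Connected) (hu : f.fV u = v) (hu' : f.fV u' = v)
    (H : ∀ γ : List EX, GX.IsPath v v γ →
        ((∃ μ : List EY, GY.IsPath u u μ ∧ μ.map f.fE = γ) ↔
          ∃ μ' : List EY, GY.IsPath u' u' μ' ∧ μ'.map f.fE = γ)) :
    ∃ (aV : VY → VY) (aE : EY → EY),
      aV u = u' ∧ (∀ e, GY.s (aE e) = aV (GY.s e)) ∧
      (∀ e, aE (GY.inv e) = GY.inv (aE e)) ∧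
      (∀ y, f.fV (aV y) = f.fV y) ∧ (∀ e, f.fE (aE e) = f.fE e) ∧
      (∀ y (μ : List EY), GY.IsPath u y μ →
        GY.IsPath u' (aV y) (pLift f hf u' (μ.map f.fE))) := by
  have huu' : f.fV u' = f.fV u := hu'.trans hu.symm
  -- the lift of the projection of any path from u, starting at u', exists
  have lift_ex : ∀ {y : VY} {μ : List EY}, GY.IsPath u y μ →
      ∃ z, GY.IsPath u' z (pLift f hf u' (μ.map f.fE)) ∧ f.fV z = f.fV y ∧
        (pLift f hf u' (μ.map f.fE)).map f.fE = μ.map f.fE := by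
    intro y μ hμ
    have : GX.IsPath (f.fV u') (f.fV y) (μ.map f.fE) := by
      rw [huu']; exact f.map_path hμ
    exact pLift_spec f hf _ _ this
  -- define aV by choosing a path
  set aV : VY → VY := fun y => (lift_ex (hY u y).choose_spec).choose with haV
  have key : ∀ (y : VY) (μ : List EY), GY.IsPath u y μ →
      GY.IsPath u' (aV y) (pLift f hf u' (μ.map f.fE)) := by
    intro y μ hμ
    obtain ⟨z, hz, _, _⟩ := lift_ex hμ
    have h0 := (lift_ex (hY u y).choose_spec).choose_spec.1
    have : z = aV y := end_indep f hf hu hu' H hμ (hY u y).choose_spec hz h0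
    rwa [this] at hz
  have comm_V : ∀ y, f.fV (aV y) = f.fV y := by
    intro y
    obtain ⟨z, hz, hz2, _⟩ := lift_ex (hY u y).choose_spec
    have : aV y = z :=
      SerreGraph.isPath_end_unique (key y _ (hY u y).choose_spec) hz
    rw [this, hz2]
  have haVu : aV u = u' := by
    have := key u [] rfl
    exact (this : u' = aV u).symm
  -- edges
  have hsE : ∀ e : EY, GX.s (f.fE e) = f.fV (aV (GY.s e)) := by
    intro e; rw [comm_V, f.map_s]
  set aE : EY → EY := fun e => eLift f hf (aV (GY.s e)) (f.fE e) (hsE e) with haE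
  have haEs : ∀ e, GY.s (aE e) = aV (GY.s e) := fun e => eLift_s f hf _ _ _
  have haEm : ∀ e, f.fE (aE e) = f.fE e := fun e => eLift_map f hf _ _ _
  have haEt : ∀ e, GY.t (aE e) = aV (GY.t e) := by
    intro e
    obtain ⟨μ, hμ⟩ := hY u (GY.s e)
    obtain ⟨z, hz, _, hzm⟩ := lift_ex hμ
    have hν := key _ _ hμ
    have h1 : GY.IsPath u' (GY.t (aE e)) (pLift f hf u' (μ.map f.fE) ++ [aE e]) :=
      SerreGraph.isPath_append hν ⟨haEs e, rfl⟩
    have h1m : (pLift f hf u' (μ.map f.fE) ++ [aE e]).map f.fE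
        = (μ ++ [e]).map f.fE := by
      rw [List.map_append, hzm, List.map_append]
      simp [haEm e]
    have h2 : pLift f hf u' (μ.map f.fE) ++ [aE e]
        = pLift f hf u' ((μ ++ [e]).map f.fE) :=
      pLift_unique f hf _ _ _ _ h1 h1m
    have hpe : GY.IsPath u (GY.t e) (μ ++ [e]) :=
      SerreGraph.isPath_append hμ ⟨rfl, rfl⟩
    have h3 := key _ _ hpe
    rw [← h2] at h3
    exact SerreGraph.isPath_end_unique h1 h3
  have haEinv : ∀ e, aE (GY.inv e) = GY.inv (aE e) := by
    intro e
    refine eLift_inj f hf (y := aV (GY.t e)) ?_ ?_ ?_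
    · exact haEs (GY.inv e)
    · show GY.s (GY.inv (aE e)) = _
      exact haEt e
    · rw [haEm, f.map_inv, f.map_inv, haEm]
  exact ⟨aV, aE, haVu, haEs, haEinv, comm_V, haEm, key⟩

end Half

lemma CovAut.ext' {VY EY VX EX : Type} {GY : SerreGraph VY EY} {GX : SerreGraph VX EX}
    {f : GraphMap GY GX} (a₁ a₂ : CovAut f) (h1 : a₁.eV = a₂.eV)
    (h2 : a₁.eE = a₂.eE) : a₁ = a₂ := by
  cases a₁; cases a₂; cases h1; cases h2; rfl


/-- Let `f : Y → X` be a covering of connected graphs with `f(u) = v = f(u')`.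
There is a covering automorphism sending `u` to `u'` iff for every closed path
`γ` at `v`, the lift of `γ` at `u` is closed iff the lift at `u'` is closed;
moreover such an automorphism is unique. -/
theorem exists_unique_covering_automorphism {VY EY VX EX : Type}
    {GY : SerreGraph VY EY} {GX : SerreGraph VX EX}
    (f : GraphMap GY GX) (hf : f.IsCovering)
    (hY : GY.Connected) (hX : GX.Connected)
    (u u' : VY) (v : VX) (hu : f.fV u = v) (hu' : f.fV u' = v) :
    ((∃ a : CovAut f, a.eV u = u') ↔
      ∀ γ : List EX, GX.IsPath v v γ →
        ((∃ μ : List EY, GY.IsPath u u μ ∧ μ.map f.fE = γ) ↔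
          ∃ μ' : List EY, GY.IsPath u' u' μ' ∧ μ'.map f.fE = γ)) ∧
    (∀ a₁ a₂ : CovAut f, a₁.eV u = u' → a₂.eV u = u' → a₁ = a₂) := by
  have huu' : f.fV u' = f.fV u := hu'.trans hu.symm
  constructor
  · constructor
    · -- existence implies the condition
      rintro ⟨a, ha⟩ γ hγ
      constructor
      · rintro ⟨μ, hμ, hm⟩
        refine ⟨μ.map a.eE, ?_, by rw [covaut_map_fE]; exact hm⟩
        have := covaut_path f a hμ
        rwa [ha] at this
      · rintro ⟨μ', hμ', hm⟩
        set b := CovAut.symm f a with hb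
        have hbu : b.eV u' = u := a.eV.symm_apply_eq.mpr ha.symm
        refine ⟨μ'.map b.eE, ?_, by rw [covaut_map_fE]; exact hm⟩
        have := covaut_path f b hμ'
        rwa [hbu] at this
    · -- the condition implies existence
      intro H
      obtain ⟨aV, aE, haVu, haEs, haEinv, haVc, haEc, keyA⟩ :=
        half f hf hY hu hu' H
      obtain ⟨bV, bE, hbVu, hbEs, hbEinv, hbVc, hbEc, keyB⟩ :=
        half f hf hY hu' hu (fun γ hγ => (H γ hγ).symm)
      have pmap : ∀ {x : VY} {y : VY} (μ : List EY), GY.IsPath x y μ → ∀ z : VY,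
          f.fV z = f.fV x → (pLift f hf z (μ.map f.fE)).map f.fE = μ.map f.fE := by
        intro x y μ hμ z hz
        have : GX.IsPath (f.fV z) (f.fV y) (μ.map f.fE) := by
          rw [hz]; exact f.map_path hμ
        exact (pLift_spec f hf _ _ this).choose_spec.2.2
      have left : ∀ y, bV (aV y) = y := by
        intro y
        obtain ⟨μ, hμ⟩ := hY u y
        have h1 := keyA y μ hμ
        have hνm := pmap μ hμ u' huu'
        have h2 := keyB (aV y) _ h1
        rw [hνm] at h2
        have hμL : μ = pLift f hf u (μ.map f.fE) :=
          pLift_unique f hf _ _ _ _ hμ rfl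
        rw [← hμL] at h2
        exact SerreGraph.isPath_end_unique h2 hμ
      have right : ∀ y, aV (bV y) = y := by
        intro y
        obtain ⟨μ, hμ⟩ := hY u' y
        have h1 := keyB y μ hμ
        have hνm := pmap μ hμ u huu'.symm
        have h2 := keyA (bV y) _ h1
        rw [hνm] at h2
        have hμL : μ = pLift f hf u' (μ.map f.fE) :=
          pLift_unique f hf _ _ _ _ hμ rfl
        rw [← hμL] at h2
        exact SerreGraph.isPath_end_unique h2 hμ
      have leftE : ∀ e, bE (aE e) = e := by
        intro e
        refine eLift_inj f hf (y := GY.s e) ?_ rfl ?_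
        · rw [hbEs, haEs, left]
        · rw [hbEc, haEc]
      have rightE : ∀ e, aE (bE e) = e := by
        intro e
        refine eLift_inj f hf (y := GY.s e) ?_ rfl ?_
        · rw [haEs, hbEs, right]
        · rw [haEc, hbEc]
      exact ⟨⟨⟨aV, bV, left, right⟩, ⟨aE, bE, leftE, rightE⟩,
        haEs, haEinv, haVc, haEc⟩, haVu⟩
  · -- uniqueness
    intro a₁ a₂ h1 h2
    have hV : ∀ y, a₁.eV y = a₂.eV y := by
      intro y
      obtain ⟨μ, hμ⟩ := hY u y
      have p1 := covaut_path f a₁ hμ; rw [h1] at p1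
      have p2 := covaut_path f a₂ hμ; rw [h2] at p2
      have e1 : μ.map a₁.eE = pLift f hf u' (μ.map f.fE) :=
        pLift_unique f hf _ _ _ _ p1 (covaut_map_fE f a₁ μ)
      have e2 : μ.map a₂.eE = pLift f hf u' (μ.map f.fE) :=
        pLift_unique f hf _ _ _ _ p2 (covaut_map_fE f a₂ μ)
      rw [e1] at p1; rw [e2] at p2
      exact SerreGraph.isPath_end_unique p1 p2
    have hE : ∀ e, a₁.eE e = a₂.eE e := by
      intro e
      refine eLift_inj f hf (y := a₁.eV (GY.s e)) (a₁.map_s e) ?_ ?_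
      · rw [a₂.map_s, ← hV]
      · rw [a₁.comm_E, a₂.comm_E]
    exact CovAut.ext' a₁ a₂ (Equiv.ext hV) (Equiv.ext hE)
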